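/- Let G be a nontrivial metrizable topological group with identity e, κ a cardinal (index set), and H a subgroup of the product G^κ containing the direct sum ⊕_κ G = {f ∈ G^κ : f(i) ≠ e for only finitely many i}. Then H is a κ-Fréchet–Urysohn space. -/

import Mathlib

open Filter Topology

/-- A topological space is κ-Fréchet–Urysohn if for every open set `U` and every point
`x` in the closure of `U` there is a sequence in `U` converging to `x`. -/
def KappaFrechetUrysohn (X : Type*) [TopologicalSpace X] : Prop :=
  ∀ U : Set X, IsOpen U → ∀ x ∈ closure U,
    ∃ u : ℕ → X, (∀ n, u n ∈ U) ∧ Tendsto u atTop (𝓝 x)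

/-- Finitely supported functions are dense in the product. -/
lemma dense_finite_support {G : Type*} [One G] [TopologicalSpace G] {κ : Type*} :
    Dense {f : κ → G | {i | f i ≠ 1}.Finite} := by
  classical
  intro f
  rw [mem_closure_iff]
  intro o ho hf
  obtain ⟨I, u, hIu, hsub⟩ := isOpen_pi_iff.mp ho f hf
  refine ⟨fun i => if i ∈ I then f i else 1, ?_, ?_⟩
  · apply hsub
    intro i hi
    have : (if i ∈ I then f i else 1) ∈ u i := by
      rw [if_pos (Finset.mem_coe.mp hi)]
      exact (hIu i hi).2
    exact this
  · apply Set.Finite.subset I.finite_toSet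
    intro i hi
    simp only [Set.mem_setOf_eq] at hi
    by_contra h
    exact hi (if_neg h)

/-- The σ-product (direct sum) is Fréchet–Urysohn at `1`: any subset of finitely
supported functions with `1` in its closure contains a sequence converging to `1`. -/
lemma sigma_fu {G : Type*} [One G] [TopologicalSpace G]
    [FirstCountableTopology G] {κ : Type*}
    (S : Set (κ → G)) (hS : ∀ f ∈ S, {i | f i ≠ 1}.Finite)
    (h1 : (1 : κ → G) ∈ closure S) :
    ∃ u : ℕ → (κ → G), (∀ n, u n ∈ S) ∧ Tendsto u atTop (𝓝 1) := by
  obtain ⟨B, hB⟩ := (𝓝 (1 : G)).exists_antitone_basis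
  have pick_ex : ∀ (n : ℕ) (F : {F : Set κ // F.Finite}),
      ∃ a, a ∈ S ∧ ∀ i ∈ F.1, a i ∈ B n := by
    rintro n ⟨F, hF⟩
    have hN : F.pi (fun _ => B n) ∈ 𝓝 (1 : κ → G) :=
      set_pi_mem_nhds hF (fun i _ => hB.toHasBasis.mem_of_mem trivial)
    obtain ⟨a, haN, haS⟩ := mem_closure_iff_nhds.mp h1 _ hN
    exact ⟨a, haS, fun i hi => haN i hi⟩
  choose pick hpickS hpickB using pick_ex
  -- recursive construction
  let g : ℕ → ((κ → G) × {F : Set κ // F.Finite}) := fun n =>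
    Nat.rec
      ((pick 0 ⟨∅, Set.finite_empty⟩),
        ⟨{i | pick 0 ⟨∅, Set.finite_empty⟩ i ≠ 1}, hS _ (hpickS 0 ⟨∅, Set.finite_empty⟩)⟩)
      (fun n p =>
        ((pick (n + 1) p.2),
          ⟨p.2.1 ∪ {i | pick (n + 1) p.2 i ≠ 1},
            p.2.2.union (hS _ (hpickS (n + 1) p.2))⟩)) n
  set a : ℕ → κ → G := fun n => (g n).1 with ha
  set F : ℕ → Set κ := fun n => (g n).2.1 with hFdef
  have haS : ∀ n, a n ∈ S := by
    intro n
    cases n with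
    | zero => exact hpickS 0 ⟨∅, Set.finite_empty⟩
    | succ n => exact hpickS (n + 1) (g n).2
  have hsupp : ∀ n, {i | a n i ≠ 1} ⊆ F n := by
    intro n
    cases n with
    | zero => exact Set.Subset.rfl
    | succ n => exact Set.subset_union_right
  have hstep : ∀ n, F n ⊆ F (n + 1) := fun n => Set.subset_union_left
  have hmono : Monotone F := monotone_nat_of_le_succ hstep
  have hBn : ∀ n, ∀ i ∈ F n, a (n + 1) i ∈ B (n + 1) :=
    fun n => hpickB (n + 1) (g n).2
  refine ⟨a, haS, ?_⟩
  rw [tendsto_pi_nhds]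
  intro i
  simp only [Pi.one_apply]
  by_cases h : ∃ m, i ∈ F m
  · obtain ⟨m, hm⟩ := h
    rw [hB.toHasBasis.tendsto_right_iff]
    intro n _
    filter_upwards [eventually_ge_atTop (max (m + 1) n)] with k hk
    obtain ⟨k, rfl⟩ : ∃ j, k = j + 1 :=
      ⟨k - 1, by omega⟩
    have hik : i ∈ F k := hmono (by omega : m ≤ k) hm
    exact hB.antitone (by omega : n ≤ k + 1) (hBn k i hik)
  · push_neg at h
    have : ∀ n, a n i = 1 := by
      intro n
      by_contra hne
      exact h n (hsupp n hne)
    simp only [this]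
    exact tendsto_const_nhds

theorem stmt5 {G : Type*} [Group G] [TopologicalSpace G] [IsTopologicalGroup G]
    [TopologicalSpace.MetrizableSpace G] [Nontrivial G] {κ : Type*}
    (H : Subgroup (κ → G))
    (hH : {f : κ → G | {i | f i ≠ 1}.Finite} ⊆ (H : Set (κ → G))) :
    KappaFrechetUrysohn ↥H := by
  intro U hU x hx
  obtain ⟨W, hWopen, hWU⟩ := isOpen_induced_iff.mp hU
  have hxW : (x : κ → G) ∈ closure W := by
    have h1 : (x : κ → G) ∈ closure (Subtype.val '' U) :=
      image_closure_subset_closure_image continuous_subtype_val ⟨x, hx, rfl⟩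
    refine closure_mono ?_ h1
    rintro _ ⟨y, hy, rfl⟩
    rw [← hWU] at hy
    exact hy
  set S : Set (κ → G) := {f | {i | f i ≠ 1}.Finite ∧ (x : κ → G) * f ∈ W} with hSdef
  have hS1 : (1 : κ → G) ∈ closure S := by
    rw [mem_closure_iff_nhds]
    intro N hN
    obtain ⟨N', hN'N, hN'open, h1N'⟩ := mem_nhds_iff.mp hN
    set L := Homeomorph.mulLeft (x : κ → G) with hL
    have hO2open : IsOpen (L '' N') := L.isOpen_image.mpr hN'open
    have hxO2 : (x : κ → G) ∈ L '' N' := ⟨1, h1N', mul_one _⟩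
    obtain ⟨w, hwO2, hwW⟩ := mem_closure_iff_nhds.mp hxW _ (hO2open.mem_nhds hxO2)
    set L' := Homeomorph.mulLeft ((x : κ → G)⁻¹) with hL'
    have hOopen : IsOpen (L' '' (W ∩ L '' N')) :=
      L'.isOpen_image.mpr (hWopen.inter hO2open)
    have hOne : (L' '' (W ∩ L '' N')).Nonempty := ⟨L' w, w, ⟨hwW, hwO2⟩, rfl⟩
    obtain ⟨t, htO, htFin⟩ := dense_finite_support.inter_open_nonempty _ hOopen hOne
    obtain ⟨o, ⟨hoW, hoO2⟩, hot⟩ := htO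
    have hxt : (x : κ → G) * t = o := by
      rw [← hot]; show (x : κ → G) * ((x : κ → G)⁻¹ * o) = o; group
    refine ⟨t, ?_, htFin, ?_⟩
    · -- t ∈ N
      obtain ⟨n, hnN', hno⟩ := hoO2
      have : t = n := by
        have : (x : κ → G) * t = (x : κ → G) * n := by rw [hxt, ← hno]; rfl
        exact mul_left_cancel this.symm ▸ (mul_left_cancel this).symm
      rw [this]; exact hN'N hnN'
    · rw [hxt]; exact hoW
  obtain ⟨u, huS, hu1⟩ := sigma_fu S (fun f hf => hf.1) hS1
  refine ⟨fun n => ⟨(x : κ → G) * u n, H.mul_mem x.2 (hH (huS n).1)⟩, fun n => ?_, ?_⟩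
  · show (⟨(x : κ → G) * u n, _⟩ : ↥H) ∈ U
    rw [← hWU]
    exact (huS n).2
  · rw [tendsto_subtype_rng]
    have := hu1.const_mul (x : κ → G)
    rw [mul_one] at this
    exact this
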